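/- Let Γ be a (G,s)-arc-transitive digraph with s ≥ 2, where G is a group of automorphisms of Γ, let M be a normal subgroup of G that is transitive on the vertices of Γ, and let v_1 → v_2 → ⋯ → v_s be an (s−1)-arc of Γ. Then G = M · G_{v_1⋯v_i} for each i ∈ {1,…,s}, where G_{v_1⋯v_i} denotes the pointwise stabilizer of v_1,…,v_i in G. -/

import Mathlib

open scoped Pointwise

/-- An `s`-arc of the digraph `(V, r)`. -/
def IsSArc {V : Type*} (r : V → V → Prop) (s : ℕ) (v : ℕ → V) : Prop :=
  ∀ i < s, r (v i) (v (i + 1))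

/-- The digraph `(V, r)` is `(G, s)`-arc-transitive. -/
def ArcTrans {V : Type*} (r : V → V → Prop) (G : Subgroup (Equiv.Perm V)) (s : ℕ) : Prop :=
  ∀ v w : ℕ → V, IsSArc r s v → IsSArc r s w → ∃ g ∈ G, ∀ i ≤ s, g (v i) = w i

/-- Let `Γ` be a `(G,s)`-arc-transitive digraph with `s ≥ 2`, let `M` be
a vertex-transitive normal subgroup of `G`, and let `v 1 → v 2 → ⋯ → v s` be an
`(s−1)`-arc of `Γ`.  Then `G = M ⬝ G_{v_1⋯v_i}` for each `i ∈ {1,…,s}`. -/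
theorem stmt8 {V : Type*} [Finite V] (r : V → V → Prop)
    (hirr : ∀ a, ¬ r a a) (hasym : ∀ a b, r a b → ¬ r b a)
    (G M : Subgroup (Equiv.Perm V))
    (hGaut : ∀ g ∈ G, ∀ a b, r a b ↔ r (g a) (g b))
    (s : ℕ) (hs : 2 ≤ s)
    (hGs : ArcTrans r G s)
    (hMG : M ≤ G)
    (hMnorm : ∀ g ∈ G, ∀ n ∈ M, g * n * g⁻¹ ∈ M)
    (hMtrans : ∀ a b : V, ∃ n ∈ M, n a = b)
    (v : ℕ → V) (hv : ∀ i, 1 ≤ i → i < s → r (v i) (v (i + 1))) :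
    ∀ i, 1 ≤ i → i ≤ s →
      (M : Set (Equiv.Perm V)) *
          {x : Equiv.Perm V | x ∈ G ∧ ∀ j, 1 ≤ j → j ≤ i → x (v j) = v j} =
        (G : Set (Equiv.Perm V)) := by
  have hv12 : r (v 1) (v 2) := hv 1 le_rfl (by omega)
  -- every vertex has an out-neighbor
  have hout : ∀ a : V, ∃ b, r a b := by
    intro a
    obtain ⟨n, hn, hna⟩ := hMtrans (v 1) a
    exact ⟨n (v 2), by rw [← hna]; exact (hGaut n (hMG hn) (v 1) (v 2)).mp hv12⟩
  choose f hf using hout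
  -- every i-arc (i ≤ s) extends to an s-arc
  have hext : ∀ (i : ℕ) (w : ℕ → V), IsSArc r i w →
      ∃ w' : ℕ → V, IsSArc r s w' ∧ ∀ j ≤ i, w' j = w j := by
    intro i w hw
    refine ⟨fun j => if j ≤ i then w j else f^[j - i] (w i), ?_, ?_⟩
    · intro j hj
      by_cases h1 : j + 1 ≤ i
      · simp only [if_pos h1, if_pos (by omega : j ≤ i)]
        exact hw j (by omega)
      · by_cases h2 : j ≤ i
        · have hji : j = i := by omega
          subst hji
          simp only [if_pos le_rfl, if_neg h1]
          have e1 : j + 1 - j = 1 := by omega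
          rw [e1]
          simpa using hf (w j)
        · simp only [if_neg h1, if_neg h2]
          have e1 : j + 1 - i = (j - i) + 1 := by omega
          rw [e1, Function.iterate_succ_apply']
          exact hf _
    · intro j hj; simp [hj]
  -- G is transitive on i-arcs for i ≤ s
  have hGtr : ∀ i ≤ s, ∀ a b : ℕ → V, IsSArc r i a → IsSArc r i b →
      ∃ g ∈ G, ∀ j ≤ i, g (a j) = b j := by
    intro i hi a b ha hb
    obtain ⟨a', ha', haeq⟩ := hext i a ha
    obtain ⟨b', hb', hbeq⟩ := hext i b hb
    obtain ⟨g, hg, hgab⟩ := hGs a' b' ha' hb'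
    exact ⟨g, hg, fun j hj => by
      rw [← haeq j hj, ← hbeq j hj]; exact hgab j (hj.trans hi)⟩
  -- M is transitive on i-arcs for i ≤ s - 1
  have hMtr : ∀ i, i + 1 ≤ s → ∀ a b : ℕ → V, IsSArc r i a → IsSArc r i b →
      ∃ m ∈ M, ∀ j ≤ i, m (a j) = b j := by
    intro i
    induction i with
    | zero =>
      intro _ a b _ _
      obtain ⟨m, hm, hme⟩ := hMtrans (a 0) (b 0)
      refine ⟨m, hm, fun j hj => ?_⟩
      have hj0 : j = 0 := Nat.le_zero.mp hj
      subst hj0; exact hme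
    | succ i ih =>
      intro hi1 a b ha hb
      have hsub : ∀ (c : ℕ → V), IsSArc r (i + 1) c → IsSArc r i c :=
        fun c hc j hj => hc j (by omega)
      have hshift : ∀ (c : ℕ → V), IsSArc r (i + 1) c → IsSArc r i (fun j => c (j + 1)) :=
        fun c hc j hj => hc (j + 1) (by omega)
      obtain ⟨m, hm, hme⟩ := ih (by omega) a (fun j => a (j + 1)) (hsub a ha) (hshift a ha)
      obtain ⟨m', hm', hme'⟩ := ih (by omega) b (fun j => a (j + 1)) (hsub b hb) (hshift a ha)
      set c : ℕ → V := fun j => if j ≤ i + 1 then a j else m (a (i + 1)) with hcdef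
      set d : ℕ → V := fun j => if j ≤ i + 1 then a j else m' (b (i + 1)) with hddef
      have hcarc : IsSArc r (i + 2) c := by
        intro j hj
        by_cases h1 : j + 1 ≤ i + 1
        · simp only [hcdef, if_pos h1, if_pos (by omega : j ≤ i + 1)]
          exact ha j (by omega)
        · have hji : j = i + 1 := by omega
          subst hji
          simp only [hcdef, if_pos le_rfl, if_neg h1]
          have h2 := (hGaut m (hMG hm) (a i) (a (i + 1))).mp (ha i (by omega))
          rwa [hme i le_rfl] at h2
      have hdarc : IsSArc r (i + 2) d := by
        intro j hj
        by_cases h1 : j + 1 ≤ i + 1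
        · simp only [hddef, if_pos h1, if_pos (by omega : j ≤ i + 1)]
          exact ha j (by omega)
        · have hji : j = i + 1 := by omega
          subst hji
          simp only [hddef, if_pos le_rfl, if_neg h1]
          have h2 := (hGaut m' (hMG hm') (b i) (b (i + 1))).mp (hb i (by omega))
          rwa [hme' i le_rfl] at h2
      obtain ⟨g, hg, hgcd⟩ := hGtr (i + 2) hi1 c d hcarc hdarc
      have hgfix : ∀ j ≤ i + 1, g (a j) = a j := by
        intro j hj
        have h2 := hgcd j (by omega)
        simpa [hcdef, hddef, if_pos hj] using h2
      have hkey : ∀ j ≤ i + 1, g (m (a j)) = m' (b j) := by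
        intro j hj
        rcases Nat.lt_or_ge j (i + 1) with h | h
        · rw [hme j (by omega), hme' j (by omega)]
          exact hgfix (j + 1) (by omega)
        · have hji : j = i + 1 := by omega
          subst hji
          have h2 := hgcd (i + 2) le_rfl
          have h3 : ¬ (i + 2 ≤ i + 1) := by omega
          simpa [hcdef, hddef, if_neg h3] using h2
      refine ⟨m'⁻¹ * (g * m * g⁻¹), M.mul_mem (M.inv_mem hm') (hMnorm g hg m hm), ?_⟩
      intro j hj
      have h1 : g⁻¹ (a j) = a j := by
        have h2 := congrArg (⇑g⁻¹) (hgfix j hj)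
        simpa using h2.symm
      simp only [Equiv.Perm.mul_apply]
      rw [h1, hkey j hj, ← Equiv.Perm.mul_apply, inv_mul_cancel, Equiv.Perm.one_apply]
  -- conclusion
  intro i hi1 his
  apply Set.Subset.antisymm
  · rintro x hx
    rw [Set.mem_mul] at hx
    obtain ⟨n, hn, h, hh, rfl⟩ := hx
    exact G.mul_mem (hMG hn) hh.1
  · intro g hg
    have hbarc : IsSArc r (i - 1) (fun j => v (j + 1)) := by
      intro j hj
      exact hv (j + 1) (by omega) (by omega)
    have haarc : IsSArc r (i - 1) (fun j => g (v (j + 1))) := by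
      intro j hj
      exact (hGaut g hg _ _).mp (hbarc j hj)
    obtain ⟨m, hm, hme⟩ := hMtr (i - 1) (by omega) _ _ haarc hbarc
    rw [Set.mem_mul]
    refine ⟨m⁻¹, M.inv_mem hm, m * g, ⟨G.mul_mem (hMG hm) hg, ?_⟩, by group⟩
    intro j hj1 hji
    have h2 := hme (j - 1) (by omega)
    simpa [Equiv.Perm.mul_apply, show j - 1 + 1 = j by omega] using h2
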